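/- arXiv:1505.02453 — 2 statements merged into one kernel-verified Lean document; each statement's English description precedes it below -/
import Mathlib

section
/- Let $X_1$, $X_2$, $Y$ be real Banach spaces, let $r \geq 1$ be an integer, and let $F : \mathbb{R} \times X_1 \times X_2 \to Y$ be a map of class $C^{r+1}$; set $q = F(0,0,0)$ and let $L : X_1 \times X_2 \to Y$ denote the derivative of $F(0,\cdot,\cdot)$ at $(0,0)$. Assume: (a) $F(0,0,x_2) = q$ for all $x_2$ in a neighborhood of $0$ in $X_2$; (b) $\ker L = \{0\} \times X_2$ (in particular the partial derivative $L^{X_1} : X_1 \to Y$, $L^{X_1}(x_1) = L(x_1,0)$, is injective); (c) the partial derivative $\partial_t F(0,0,0)$ equals $L^{X_1}(w)$ for some $w \in X_1$; (d) the continuous linear map $X_1 \times X_2 \to Y$ given by $(\bar x_1, \bar x_2) \mapsto L^{X_1}(\bar x_1) + D^2F(0,0,0)[(1,-w,0),(0,0,\bar x_2)]$ is a Banach space isomorphism, where $D^2F(0,0,0)$ is the second derivative of $F$ at $(0,0,0)$ viewed as a bilinear map on $\mathbb{R} \times X_1 \times X_2$. Then there exist $\varepsilon > 0$ and curves $x_1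 : (-\varepsilon,\varepsilon) \to X_1$ and $x_2 : (-\varepsilon,\varepsilon) \to X_2$ of class $C^r$ such that $x_1(0) = 0$, $x_2(0) = 0$, $F(t, x_1(t), x_2(t)) = q$ for all $t \in (-\varepsilon,\varepsilon)$, and $x_1'(0) = -w$. -/
open MeasureTheory Set intervalIntegral Metric Filter

universe u v

variable {E : Type u} [NormedAddCommGroup E] [NormedSpace ℝ E]

omit [NormedSpace ℝ E] in
lemma exists_tube_bound {F : Type*} [NormedAddCommGroup F]
    (f : ℝ × E → F) (hf : Continuous f) (x₀ : E) :
    ∃ ε > (0:ℝ), ∃ C : ℝ, ∀ s ∈ Icc (0:ℝ) 1, ∀ x ∈ ball x₀ ε, ‖f (s, x)‖ ≤ C := by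
  obtain ⟨C, hC⟩ := (isCompact_Icc.prod isCompact_singleton).exists_bound_of_continuousOn
    (hf.norm.continuousOn (s := Icc (0:ℝ) 1 ×ˢ ({x₀} : Set E)))
  have hsub : Icc (0:ℝ) 1 ×ˢ ({x₀} : Set E) ⊆ {p : ℝ × E | ‖f p‖ < C + 1} := by
    intro p hp
    have h := hC p hp
    rw [norm_norm] at h
    exact lt_of_le_of_lt h (by linarith)
  have hopen : IsOpen {p : ℝ × E | ‖f p‖ < C + 1} :=
    isOpen_lt hf.norm continuous_const
  obtain ⟨u, v, hu, hv, hIu, hxv, huv⟩ :=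
    generalized_tube_lemma isCompact_Icc isCompact_singleton hopen hsub
  obtain ⟨ε, hε, hball⟩ := Metric.isOpen_iff.1 hv x₀ (hxv rfl)
  refine ⟨ε, hε, C + 1, fun s hs x hx => ?_⟩
  exact le_of_lt (huv ⟨hIu hs, hball hx⟩)

lemma contDiff_parametric_integral_aux (n : ℕ) :
    ∀ (F : Type (max u v)) [NormedAddCommGroup F] [NormedSpace ℝ F]
      [CompleteSpace F], ∀ (K : ℝ × E → F), ContDiff ℝ n K →
      ContDiff ℝ n (fun x : E => ∫ s in (0:ℝ)..1, K (s, x)) := by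
  induction n with
  | zero =>
    intro F _ _ _ K hK
    rw [Nat.cast_zero, contDiff_zero] at hK ⊢
    exact continuous_parametric_intervalIntegral_of_continuous'
      (f := fun (x : E) (s : ℝ) => K (s, x)) (hK.comp continuous_swap) 0 1
  | succ n ih =>
    intro F _ _ _ K hK
    have hKcast : ContDiff ℝ ((n : WithTop ℕ∞) + 1) K := by exact_mod_cast hK
    have hKd : Differentiable ℝ K := (contDiff_succ_iff_fderiv.1 hKcast).1
    have hfd : ContDiff ℝ n (fderiv ℝ K) := (contDiff_succ_iff_fderiv.1 hKcast).2.2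
    set K' : ℝ × E → E →L[ℝ] F :=
      fun p => (fderiv ℝ K p).comp (ContinuousLinearMap.inr ℝ ℝ E) with hK'def
    have hK'c : ContDiff ℝ n K' := hfd.clm_comp contDiff_const
    have hcontK' : Continuous K' := hK'c.continuous
    have hpart : ∀ (s : ℝ) (x : E), HasFDerivAt (fun y => K (s, y)) (K' (s, x)) x := by
      intro s x
      have h0 : HasFDerivAt (fun y : E => ((s : ℝ), y))
          ((0 : E →L[ℝ] ℝ).prod (ContinuousLinearMap.id ℝ E)) x :=
        (hasFDerivAt_const s x).prodMk (hasFDerivAt_id x)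
      have h1 : HasFDerivAt (fun y : E => ((s : ℝ), y))
          (ContinuousLinearMap.inr ℝ ℝ E) x := by
        convert h0 using 1
        all_goals ext y <;> simp
      exact (hKd (s, x)).hasFDerivAt.comp x h1
    haveI : SecondCountableTopologyEither ℝ (E →L[ℝ] F) :=
      secondCountableTopologyEither_of_left ℝ _
    have key : ∀ x₀ : E, HasFDerivAt (fun x => ∫ s in (0:ℝ)..1, K (s, x))
        (∫ s in (0:ℝ)..1, K' (s, x₀)) x₀ := by
      intro x₀
      obtain ⟨ε, hε, C, hC⟩ := exists_tube_bound K' hcontK' x₀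
      apply intervalIntegral.hasFDerivAt_integral_of_dominated_of_fderiv_le
        (F := fun x s => K (s, x)) (F' := fun x s => K' (s, x))
        (bound := fun _ => C) (ball_mem_nhds x₀ hε)
      · exact Eventually.of_forall fun x =>
          ((hK.continuous.comp (continuous_id.prodMk continuous_const)).aestronglyMeasurable)
      · exact (hK.continuous.comp (continuous_id.prodMk continuous_const)).intervalIntegrable 0 1
      · exact (hcontK'.comp (continuous_id.prodMk continuous_const)).aestronglyMeasurable
      · refine Eventually.of_forall fun s hs x hx => ?_
        have hs' : s ∈ Icc (0:ℝ) 1 := Ioc_subset_Icc_self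
          (by rwa [uIoc_of_le (zero_le_one : (0:ℝ) ≤ 1)] at hs)
        exact hC s hs' x hx
      · exact intervalIntegrable_const
      · exact Eventually.of_forall fun s _ x _ => hpart s x
    have hdiffg : Differentiable ℝ fun x => ∫ s in (0:ℝ)..1, K (s, x) :=
      fun x => (key x).differentiableAt
    have hfg : (fderiv ℝ fun x => ∫ s in (0:ℝ)..1, K (s, x))
        = fun x => ∫ s in (0:ℝ)..1, K' (s, x) := funext fun x => (key x).fderiv
    have hres : ContDiff ℝ ((n : WithTop ℕ∞) + 1) fun x => ∫ s in (0:ℝ)..1, K (s, x) := by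
      refine contDiff_succ_iff_fderiv.2 ⟨hdiffg, ?_, ?_⟩
      · simp
      · rw [hfg]; exact ih (E →L[ℝ] F) K' hK'c
    exact_mod_cast hres

lemma contDiff_parametric_integral {F : Type v} [NormedAddCommGroup F]
    [NormedSpace ℝ F] [CompleteSpace F] (n : ℕ) (K : ℝ × E → F) (hK : ContDiff ℝ n K) :
    ContDiff ℝ n (fun x : E => ∫ s in (0:ℝ)..1, K (s, x)) := by
  haveI : CompleteSpace (ULift.{u} F) := completeSpace_ulift_iff.2 ‹_›
  let e := LinearIsometryEquiv.ulift ℝ F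
  let K' : ℝ × E → ULift.{u} F := fun p => e.symm (K p)
  have hK' : ContDiff ℝ n K' := e.symm.toContinuousLinearEquiv.contDiff.comp hK
  have h := contDiff_parametric_integral_aux (E := E) n (ULift.{u} F) K' hK'
  have heq : (fun x : E => ∫ s in (0:ℝ)..1, K (s, x))
      = fun x => e (∫ s in (0:ℝ)..1, K' (s, x)) := by
    funext x
    have h1 : (fun s => K (s, x))
        = fun s => e.toContinuousLinearEquiv.toContinuousLinearMap (K' (s, x)) := by
      funext s; simp [K', e]
    rw [h1, ContinuousLinearMap.intervalIntegral_comp_comm]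
    · rfl
    · exact (hK'.continuous.comp (continuous_id.prodMk continuous_const)).intervalIntegrable 0 1
  rw [heq]
  exact e.toContinuousLinearEquiv.contDiff.comp h

section Hadamard

variable {Y : Type v} [NormedAddCommGroup Y] [NormedSpace ℝ Y] [CompleteSpace Y]

/-- The Hadamard quotient `g(t,y) = ∫₀¹ ∂ₜ f(st, y) ds`. -/
noncomputable def hadamardQuot (f : ℝ × E → Y) : ℝ × E → Y :=
  fun p => ∫ s in (0:ℝ)..1, (fderiv ℝ f (s * p.1, p.2)) (1, 0)

lemma hadamard_contDiff {f : ℝ × E → Y} (n : ℕ)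
    (hf : ContDiff ℝ (n + 1 : ℕ) f) : ContDiff ℝ n (hadamardQuot f) := by
  have hf' : ContDiff ℝ ((n : WithTop ℕ∞) + 1) f := by exact_mod_cast hf
  have h1 : ContDiff ℝ n (fderiv ℝ f) := hf'.fderiv_right le_rfl
  have h2 : ContDiff ℝ n (fun q : ℝ × (ℝ × E) => ((q.1 * q.2.1 : ℝ), q.2.2)) :=
    (contDiff_fst.mul contDiff_snd.fst).prodMk contDiff_snd.snd
  have hK : ContDiff ℝ n (fun q : ℝ × (ℝ × E) =>
      (fderiv ℝ f ((q.1 * q.2.1 : ℝ), q.2.2)) ((1:ℝ), (0:E))) :=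
    (h1.comp h2).clm_apply contDiff_const
  exact contDiff_parametric_integral n _ hK

lemma hadamard_deriv_aux {f : ℝ × E → Y} (hf : Differentiable ℝ f) (t : ℝ) (y : E) (s : ℝ) :
    HasDerivAt (fun s : ℝ => f (s * t, y))
      (t • (fderiv ℝ f (s * t, y)) (1, 0)) s := by
  have hψ : HasDerivAt (fun s : ℝ => ((s * t : ℝ), y)) ((t, 0) : ℝ × E) s :=
    (hasDerivAt_mul_const t).prodMk (hasDerivAt_const s y)
  have h := (hf (s * t, y)).hasFDerivAt.comp_hasDerivAt s hψ
  have heq : ((t, 0) : ℝ × E) = t • ((1:ℝ), (0:E)) := by simp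
  rwa [heq, ContinuousLinearMap.map_smul] at h

lemma hadamard_key {f : ℝ × E → Y} (hf : ContDiff ℝ 1 f) (p : ℝ × E) :
    p.1 • hadamardQuot f p = f p - f (0, p.2) := by
  obtain ⟨t, y⟩ := p
  have hdf : Differentiable ℝ f := hf.differentiable one_ne_zero
  have hcont : Continuous fun s : ℝ => (fderiv ℝ f (s * t, y)) ((1:ℝ), (0:E)) := by
    have h1 : Continuous (fderiv ℝ f) := hf.continuous_fderiv one_ne_zero
    exact (h1.comp (by continuity)).clm_apply continuous_const
  have hFTC := intervalIntegral.integral_eq_sub_of_hasDerivAt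
    (f := fun s : ℝ => f (s * t, y))
    (f' := fun s : ℝ => t • (fderiv ℝ f (s * t, y)) (1, 0))
    (fun s _ => hadamard_deriv_aux hdf t y s)
    ((hcont.const_smul t).intervalIntegrable 0 1)
  rw [intervalIntegral.integral_smul] at hFTC
  simpa [hadamardQuot] using hFTC

lemma hadamard_at_zero {f : ℝ × E → Y} (y : E) :
    hadamardQuot f (0, y) = (fderiv ℝ f (0, y)) (1, 0) := by
  have : (fun s : ℝ => (fderiv ℝ f (s * (0:ℝ), y)) ((1:ℝ), (0:E)))
      = fun _ => (fderiv ℝ f (0, y)) ((1:ℝ), (0:E)) := by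
    funext s; simp
  simp [hadamardQuot, this]

end Hadamard




/-- Degenerate implicit function theorem (coordinate/product form), Theorem 2 of the paper,
with the submanifold `M` realized as `{0} × X₂`, the point `p = (0,0)` and `v = (w, 0)`. -/
theorem degenerate_implicit_function_theorem
    {X₁ X₂ Y : Type*}
    [NormedAddCommGroup X₁] [NormedSpace ℝ X₁] [CompleteSpace X₁]
    [NormedAddCommGroup X₂] [NormedSpace ℝ X₂] [CompleteSpace X₂]
    [NormedAddCommGroup Y] [NormedSpace ℝ Y] [CompleteSpace Y]
    (r : ℕ) (hr : 1 ≤ r)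
    (F : ℝ × X₁ × X₂ → Y)
    (hF : ContDiff ℝ (r + 1) F)
    (q : Y) (hq : q = F (0, 0, 0))
    (L : (X₁ × X₂) →L[ℝ] Y)
    (hL : L = fderiv ℝ (fun p : X₁ × X₂ => F (0, p.1, p.2)) (0, 0))
    -- (a) `F(0,0,x₂) = q` for all `x₂` in a neighborhood of `0` in `X₂`
    (ha : ∀ᶠ x₂ in nhds (0 : X₂), F (0, 0, x₂) = q)
    -- (b) `ker L = {0} × X₂`
    (hb : LinearMap.ker (L : (X₁ × X₂) →ₗ[ℝ] Y)
        = (⊥ : Submodule ℝ X₁).prod (⊤ : Submodule ℝ X₂))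
    -- (c) `∂ₜF(0,0,0) = L(w,0)` for some `w ∈ X₁`
    (w : X₁)
    (hc : deriv (fun t : ℝ => F (t, 0, 0)) 0 = L (w, 0))
    -- (d) `(x̄₁, x̄₂) ↦ L(x̄₁,0) + D²F(0,0,0)[(1,-w,0),(0,0,x̄₂)]` is a Banach space isomorphism
    (hd : ∃ e : (X₁ × X₂) ≃L[ℝ] Y, ∀ x₁ : X₁, ∀ x₂ : X₂,
        e (x₁, x₂) = L (x₁, 0)
          + fderiv ℝ (fderiv ℝ F) (0, 0, 0) (1, -w, 0) (0, 0, x₂)) :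
    ∃ ε > (0 : ℝ), ∃ x₁ : ℝ → X₁, ∃ x₂ : ℝ → X₂,
      ContDiffOn ℝ r x₁ (Set.Ioo (-ε) ε) ∧
      ContDiffOn ℝ r x₂ (Set.Ioo (-ε) ε) ∧
      x₁ 0 = 0 ∧ x₂ 0 = 0 ∧
      (∀ t ∈ Set.Ioo (-ε) ε, F (t, x₁ t, x₂ t) = q) ∧
      deriv x₁ 0 = -w := by
  obtain ⟨e, he⟩ := hd
  have hr1 : (1 : WithTop ℕ∞) ≤ (r : WithTop ℕ∞) := by exact_mod_cast hr
  have hr0 : (r : WithTop ℕ∞) ≠ 0 := by exact_mod_cast (show r ≠ 0 by omega)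
  have hF1 : ContDiff ℝ ((r : ℕ) + 1 : ℕ) F := by exact_mod_cast hF
  have hF1' : ContDiff ℝ ((r : WithTop ℕ∞) + 1) F := by exact_mod_cast hF
  have hFd : Differentiable ℝ F := hF1'.differentiable (by simp)
  -- the blown-up map H
  set H : ℝ × (X₁ × X₂) → Y := fun p => F (p.1, p.1 • (p.2.1 - w), p.2.2) with hHdef
  have hψH : ContDiff ℝ ((r : ℕ) + 1 : ℕ)
      (fun p : ℝ × (X₁ × X₂) => (p.1, p.1 • (p.2.1 - w), p.2.2)) :=
    contDiff_fst.prodMk ((contDiff_fst.smul (contDiff_snd.fst.sub contDiff_const)).prodMk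
      contDiff_snd.snd)
  have hH : ContDiff ℝ ((r : ℕ) + 1 : ℕ) H := hF1.comp hψH
  have hH1 : ContDiff ℝ 1 H := hH.of_le (by exact_mod_cast Nat.le_add_left 1 r)
  set g : ℝ × (X₁ × X₂) → Y := hadamardQuot H with hgdef
  have hg : ContDiff ℝ r g := hadamard_contDiff r hH
  have hgd : Differentiable ℝ g := hg.differentiable hr0
  have hkey : ∀ p : ℝ × (X₁ × X₂), p.1 • g p = H p - H (0, p.2) :=
    fun p => hadamard_key hH1 p
  -- fact A : value of g on the slice t = 0
  have factA : ∀ y : X₁ × X₂,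
      g (0, y) = fderiv ℝ F ((0:ℝ), (0:X₁), y.2) ((1:ℝ), y.1 - w, (0:X₂)) := by
    intro y
    have hψ : HasFDerivAt (fun p : ℝ × (X₁ × X₂) => (p.1, p.1 • (p.2.1 - w), p.2.2))
        ((ContinuousLinearMap.fst ℝ ℝ (X₁ × X₂)).prod
          (((0:ℝ) • ((ContinuousLinearMap.fst ℝ X₁ X₂).comp
                (ContinuousLinearMap.snd ℝ ℝ (X₁ × X₂)))
            + (ContinuousLinearMap.fst ℝ ℝ (X₁ × X₂)).smulRight (y.1 - w)).prod
            ((ContinuousLinearMap.snd ℝ X₁ X₂).comp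
              (ContinuousLinearMap.snd ℝ ℝ (X₁ × X₂))))) ((0:ℝ), y) := by
      have hc1 : HasFDerivAt (fun p : ℝ × (X₁ × X₂) => p.1)
          (ContinuousLinearMap.fst ℝ ℝ (X₁ × X₂)) ((0:ℝ), y) := hasFDerivAt_fst
      have hf1 : HasFDerivAt (fun p : ℝ × (X₁ × X₂) => p.2.1 - w)
          ((ContinuousLinearMap.fst ℝ X₁ X₂).comp (ContinuousLinearMap.snd ℝ ℝ (X₁ × X₂)))
          ((0:ℝ), y) := (hasFDerivAt_fst.comp _ hasFDerivAt_snd).sub_const w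
      have hf2 : HasFDerivAt (fun p : ℝ × (X₁ × X₂) => p.2.2)
          ((ContinuousLinearMap.snd ℝ X₁ X₂).comp (ContinuousLinearMap.snd ℝ ℝ (X₁ × X₂)))
          ((0:ℝ), y) := hasFDerivAt_snd.comp _ hasFDerivAt_snd
      exact hasFDerivAt_fst.prodMk ((hc1.smul hf1).prodMk hf2)
    have hFy : HasFDerivAt F (fderiv ℝ F ((0:ℝ), (0:X₁), y.2))
        ((fun p : ℝ × (X₁ × X₂) => (p.1, p.1 • (p.2.1 - w), p.2.2)) ((0:ℝ), y)) := by
      have h0 := (hFd ((0:ℝ), (0:X₁), y.2)).hasFDerivAt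
      simpa using h0
    have hcomp := hFy.comp ((0:ℝ), y) hψ
    have hval := hcomp.fderiv
    have hz := hadamard_at_zero (f := H) y
    rw [hgdef, hz]
    have hH_eq : H = F ∘ (fun p : ℝ × (X₁ × X₂) => (p.1, p.1 • (p.2.1 - w), p.2.2)) := rfl
    rw [hH_eq, hval]
    simp
  -- fact B : L is the partial derivative of F in (x₁,x₂)
  have factB : ∀ v : X₁ × X₂, L v = fderiv ℝ F ((0:ℝ), (0:X₁), (0:X₂)) ((0:ℝ), v) := by
    intro v
    have hι : HasFDerivAt (fun p : X₁ × X₂ => (((0:ℝ), p) : ℝ × (X₁ × X₂)))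
        (ContinuousLinearMap.inr ℝ ℝ (X₁ × X₂)) ((0:X₁), (0:X₂)) := by
      have h0 : HasFDerivAt (fun p : X₁ × X₂ => (((0:ℝ), p) : ℝ × (X₁ × X₂)))
          ((0 : (X₁ × X₂) →L[ℝ] ℝ).prod (ContinuousLinearMap.id ℝ (X₁ × X₂)))
          ((0:X₁), (0:X₂)) := (hasFDerivAt_const 0 _).prodMk (hasFDerivAt_id _)
      exact h0
    have hcomp := (hFd ((0:ℝ), (0:X₁), (0:X₂))).hasFDerivAt.comp ((0:X₁), (0:X₂)) hι
    have : L = (fderiv ℝ F ((0:ℝ), (0:X₁), (0:X₂))).comp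
        (ContinuousLinearMap.inr ℝ ℝ (X₁ × X₂)) := by
      rw [hL]; exact hcomp.fderiv
    rw [this]; rfl
  -- fact C : the t-partial derivative of F
  have factC : deriv (fun t : ℝ => F (t, 0, 0)) 0
      = fderiv ℝ F ((0:ℝ), (0:X₁), (0:X₂)) ((1:ℝ), (0:X₁), (0:X₂)) := by
    have hι : HasDerivAt (fun t : ℝ => ((t, ((0:X₁), (0:X₂))) : ℝ × (X₁ × X₂)))
        ((1:ℝ), ((0:X₁), (0:X₂))) 0 := (hasDerivAt_id 0).prodMk (hasDerivAt_const 0 _)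
    exact ((hFd _).hasFDerivAt.comp_hasDerivAt 0 hι).deriv
  -- fact D : g vanishes at the origin
  have factD : g ((0:ℝ), ((0:X₁), (0:X₂))) = 0 := by
    have h1 := factA ((0:X₁), (0:X₂))
    have h2 : ((1:ℝ), (0:X₁) - w, (0:X₂))
        = (((1:ℝ), (0:X₁), (0:X₂)) : ℝ × X₁ × X₂) + (((0:ℝ), -w, (0:X₂)) : ℝ × X₁ × X₂) := by
      simp [Prod.ext_iff]
    have h3 : (((0:ℝ), -w, (0:X₂)) : ℝ × X₁ × X₂) = -(((0:ℝ), w, (0:X₂)) : ℝ × X₁ × X₂) := by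
      simp [Prod.ext_iff]
    rw [h1, h2, map_add, h3, map_neg, ← factC, ← factB (w, 0), hc]
    simp
  -- fact E : the derivative of the slice map equals e
  set pt : ℝ × X₁ × X₂ := ((0:ℝ), (0:X₁), (0:X₂)) with hptdef
  have hsymm : IsSymmSndFDerivAt ℝ F pt :=
    hF1'.contDiffAt.isSymmSndFDerivAt (by
      calc minSmoothness ℝ 2 = 1 + 1 := by rw [minSmoothness_of_isRCLikeNormedField]; norm_num
      _ ≤ (r : WithTop ℕ∞) + 1 := by exact add_le_add_left hr1 1)
  set J : (X₁ × X₂) →L[ℝ] ℝ × X₁ × X₂ :=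
    (0 : (X₁ × X₂) →L[ℝ] ℝ).prod ((0 : (X₁ × X₂) →L[ℝ] X₁).prod
      (ContinuousLinearMap.snd ℝ X₁ X₂)) with hJdef
  have hj : HasFDerivAt (fun y : X₁ × X₂ => (((0:ℝ), (0:X₁), y.2) : ℝ × X₁ × X₂)) J
      ((0:X₁), (0:X₂)) :=
    (hasFDerivAt_const 0 _).prodMk ((hasFDerivAt_const 0 _).prodMk hasFDerivAt_snd)
  have hfF : HasFDerivAt (fderiv ℝ F) (fderiv ℝ (fderiv ℝ F) pt) pt :=
    (((hF1'.fderiv_right le_rfl).differentiable hr0) pt).hasFDerivAt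
  have hPhi0 := hfF.comp (f := fun y : X₁ × X₂ => (((0:ℝ), (0:X₁), y.2) : ℝ × X₁ × X₂)) ((0:X₁), (0:X₂)) hj
  have hPhi : HasFDerivAt (fun y : X₁ × X₂ => fderiv ℝ F ((0:ℝ), (0:X₁), y.2))
      ((fderiv ℝ (fderiv ℝ F) pt).comp J) ((0:X₁), (0:X₂)) := hPhi0
  set V : (X₁ × X₂) →L[ℝ] ℝ × X₁ × X₂ :=
    (0 : (X₁ × X₂) →L[ℝ] ℝ).prod ((ContinuousLinearMap.fst ℝ X₁ X₂).prod
      (0 : (X₁ × X₂) →L[ℝ] X₂)) with hVdef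
  have hv : HasFDerivAt (fun y : X₁ × X₂ => (((1:ℝ), y.1 - w, (0:X₂)) : ℝ × X₁ × X₂)) V
      ((0:X₁), (0:X₂)) :=
    (hasFDerivAt_const 1 _).prodMk ((hasFDerivAt_fst.sub_const w).prodMk (hasFDerivAt_const 0 _))
  have hmE : HasFDerivAt (fun y : X₁ × X₂ => fderiv ℝ F ((0:ℝ), (0:X₁), y.2)
      ((1:ℝ), y.1 - w, (0:X₂))) (↑e : (X₁ × X₂) →L[ℝ] Y) ((0:X₁), (0:X₂)) := by
    refine (hPhi.clm_apply hv).congr_fderiv (ContinuousLinearMap.ext fun z => ?_)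
    have hez := he z.1 z.2
    have h1 : L (z.1, (0:X₂)) = fderiv ℝ F pt ((0:ℝ), z.1, (0:X₂)) := factB (z.1, 0)
    have h2 := hsymm (((1:ℝ), -w, (0:X₂)) : ℝ × X₁ × X₂) (((0:ℝ), (0:X₁), z.2) : ℝ × X₁ × X₂)
    simp only [ContinuousLinearMap.add_apply, ContinuousLinearMap.comp_apply,
      ContinuousLinearMap.flip_apply, ContinuousLinearMap.prod_apply,
      ContinuousLinearMap.coe_fst', ContinuousLinearMap.coe_snd',
      ContinuousLinearMap.zero_apply, hJdef, hVdef, zero_sub]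
    rw [← h1, ← h2]
    exact hez.symm
  -- the slice of g
  have hι : HasFDerivAt (fun p : X₁ × X₂ => (((0:ℝ), p) : ℝ × (X₁ × X₂)))
      (ContinuousLinearMap.inr ℝ ℝ (X₁ × X₂)) ((0:X₁), (0:X₂)) :=
    (hasFDerivAt_const 0 _).prodMk (hasFDerivAt_id _)
  have hslice : HasFDerivAt (fun y : X₁ × X₂ => g ((0:ℝ), y))
      ((fderiv ℝ g ((0:ℝ), ((0:X₁), (0:X₂)))).comp (ContinuousLinearMap.inr ℝ ℝ (X₁ × X₂)))
      ((0:X₁), (0:X₂)) :=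
    (hgd ((0:ℝ), ((0:X₁), (0:X₂)))).hasFDerivAt.comp ((0:X₁), (0:X₂)) hι
  have hfun : (fun y : X₁ × X₂ => g ((0:ℝ), y))
      = fun y : X₁ × X₂ => fderiv ℝ F ((0:ℝ), (0:X₁), y.2) ((1:ℝ), y.1 - w, (0:X₂)) :=
    funext fun y => factA y
  have huniq : (fderiv ℝ g ((0:ℝ), ((0:X₁), (0:X₂)))).comp
      (ContinuousLinearMap.inr ℝ ℝ (X₁ × X₂)) = (↑e : (X₁ × X₂) →L[ℝ] Y) := by
    refine HasFDerivAt.unique ?_ hmE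
    rw [← hfun]
    exact hslice
  set Dg := fderiv ℝ g ((0:ℝ), ((0:X₁), (0:X₂))) with hDgdef
  set a : Y := Dg ((1:ℝ), ((0:X₁), (0:X₂))) with hadef
  have hDg : ∀ (τ : ℝ) (v : X₁ × X₂), Dg (τ, v) = τ • a + e v := by
    intro τ v
    have h1 : ((τ, v) : ℝ × (X₁ × X₂)) = τ • (((1:ℝ), ((0:X₁), (0:X₂))) : ℝ × (X₁ × X₂))
        + (((0:ℝ), v) : ℝ × (X₁ × X₂)) := by
      simp [Prod.ext_iff]
    rw [h1, map_add, ContinuousLinearMap.map_smul]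
    congr 1
    exact DFunLike.congr_fun huniq v
  -- the linear equivalence
  set fwd : (ℝ × (X₁ × X₂)) →L[ℝ] ℝ × Y := (ContinuousLinearMap.fst ℝ ℝ (X₁ × X₂)).prod Dg
    with hfwddef
  set bwd : (ℝ × Y) →L[ℝ] ℝ × (X₁ × X₂) := (ContinuousLinearMap.fst ℝ ℝ Y).prod
    ((e.symm : Y →L[ℝ] (X₁ × X₂)).comp
      (ContinuousLinearMap.snd ℝ ℝ Y - (ContinuousLinearMap.fst ℝ ℝ Y).smulRight a))
    with hbwddef
  have hleft : Function.LeftInverse bwd fwd := by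
    rintro ⟨τ, v⟩
    simp [hfwddef, hbwddef, hDg τ v, add_sub_cancel_left]
  have hright : Function.RightInverse bwd fwd := by
    rintro ⟨τ, z⟩
    simp [hfwddef, hbwddef, hDg]
  set 𝓔 := ContinuousLinearEquiv.equivOfInverse fwd bwd hleft hright with hEdef
  set G : ℝ × (X₁ × X₂) → ℝ × Y := fun p => (p.1, g p) with hGdef
  have hG' : HasFDerivAt G (↑𝓔 : (ℝ × (X₁ × X₂)) →L[ℝ] ℝ × Y)
      ((0:ℝ), ((0:X₁), (0:X₂))) := by
    have h0 : HasFDerivAt G fwd ((0:ℝ), ((0:X₁), (0:X₂))) :=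
      hasFDerivAt_fst.prodMk ((hgd _).hasFDerivAt)
    exact h0
  have hGc : ContDiffAt ℝ (r : WithTop ℕ∞) G ((0:ℝ), ((0:X₁), (0:X₂))) :=
    (contDiff_fst.prodMk hg).contDiffAt
  set Ψ := hGc.localInverse hG' hr0 with hΨdef
  have hΨc : ContDiffAt ℝ (r : WithTop ℕ∞) Ψ (G ((0:ℝ), ((0:X₁), (0:X₂)))) :=
    hGc.to_localInverse hG' hr0
  have hg0 : g 0 = 0 := by
    rw [show (0 : ℝ × X₁ × X₂) = pt from by simp [hptdef]; rfl]
    exact factD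
  have hGp0 : G ((0:ℝ), ((0:X₁), (0:X₂))) = ((0:ℝ), (0:Y)) := by
    simp [hGdef]; exact hg0
  have hΨ0 : Ψ ((0:ℝ), (0:Y)) = ((0:ℝ), ((0:X₁), (0:X₂))) := by
    have h := hGc.localInverse_apply_image (f' := 𝓔) hG' hr0
    rwa [hGp0] at h
  have hrightinv : ∀ᶠ z in nhds (((0:ℝ), (0:Y)) : ℝ × Y), G (Ψ z) = z := by
    have h := (hGc.hasStrictFDerivAt' hG' hr0).eventually_right_inverse
    rwa [hGp0] at h
  rw [hGp0] at hΨc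
  obtain ⟨U, hUmem, hΨU⟩ := hΨc.contDiffOn le_rfl (by simp)
  have hΨcont : ContinuousAt Ψ ((0:ℝ), (0:Y)) := hΨc.continuousAt
  -- choose ε
  have hι0 : Filter.Tendsto (fun t : ℝ => ((t, (0:Y)) : ℝ × Y)) (nhds 0)
      (nhds (((0:ℝ), (0:Y)) : ℝ × Y)) :=
    Continuous.tendsto' (continuous_id.prodMk continuous_const) 0 _ rfl
  have hx2tend : Filter.Tendsto (fun t : ℝ => (Ψ (t, (0:Y))).2.2) (nhds 0) (nhds (0:X₂)) := by
    have h1 : Filter.Tendsto (fun t : ℝ => Ψ (t, (0:Y))) (nhds 0)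
        (nhds (((0:ℝ), ((0:X₁), (0:X₂))) : ℝ × (X₁ × X₂))) := by
      have := hΨcont.tendsto.comp hι0
      rwa [hΨ0] at this
    exact ((continuous_snd.comp continuous_snd).tendsto _).comp h1
  have hev : ∀ᶠ t : ℝ in nhds 0, ((t, (0:Y)) : ℝ × Y) ∈ U
      ∧ G (Ψ (t, (0:Y))) = (t, (0:Y)) ∧ F ((0:ℝ), (0:X₁), (Ψ (t, (0:Y))).2.2) = q := by
    refine ((hι0.eventually hUmem).and ((hι0.eventually hrightinv).and ?_))
    exact hx2tend.eventually ha
  obtain ⟨ε, εpos, hball⟩ := Metric.eventually_nhds_iff_ball.1 hev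
  have hIooball : ∀ t ∈ Set.Ioo (-ε) ε, t ∈ Metric.ball (0:ℝ) ε := by
    intro t ht
    rw [Real.ball_eq_Ioo]
    simpa using ht
  have hIoonhds : Set.Ioo (-ε) ε ∈ nhds (0:ℝ) :=
    Ioo_mem_nhds (by linarith) εpos
  -- the curves
  have hcurve : ContDiffOn ℝ (r : WithTop ℕ∞) (fun t : ℝ => Ψ (t, (0:Y)))
      (Set.Ioo (-ε) ε) := by
    refine hΨU.comp ((contDiff_id.prodMk contDiff_const).contDiffOn) ?_
    intro t ht
    exact (hball t (hIooball t ht)).1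
  have hu1 : ContDiffOn ℝ (r : WithTop ℕ∞) (fun t : ℝ => (Ψ (t, (0:Y))).2.1)
      (Set.Ioo (-ε) ε) := (contDiff_fst.comp contDiff_snd).comp_contDiffOn hcurve
  have hu2 : ContDiffOn ℝ (r : WithTop ℕ∞) (fun t : ℝ => (Ψ (t, (0:Y))).2.2)
      (Set.Ioo (-ε) ε) := (contDiff_snd.comp contDiff_snd).comp_contDiffOn hcurve
  refine ⟨ε, εpos, fun t => t • ((Ψ (t, (0:Y))).2.1 - w), fun t => (Ψ (t, (0:Y))).2.2,
    ?_, ?_, ?_, ?_, ?_, ?_⟩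
  · exact (contDiffOn_id (𝕜 := ℝ)).smul (hu1.sub contDiffOn_const)
  · exact hu2
  · simp
  · show (Ψ ((0:ℝ), (0:Y))).2.2 = 0
    rw [hΨ0]
  · intro t ht
    obtain ⟨hU1, hG1, hq1⟩ := hball t (hIooball t ht)
    have h1 : (Ψ (t, (0:Y))).1 = t := congrArg Prod.fst hG1
    have h2 : g (Ψ (t, (0:Y))) = (0:Y) := congrArg Prod.snd hG1
    have h3 := hkey (Ψ (t, (0:Y)))
    rw [h2, smul_zero] at h3
    have h4 : H (Ψ (t, (0:Y))) = H ((0:ℝ), (Ψ (t, (0:Y))).2) :=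
      sub_eq_zero.1 h3.symm
    have h5 : H (Ψ (t, (0:Y))) = F (t, t • ((Ψ (t, (0:Y))).2.1 - w), (Ψ (t, (0:Y))).2.2) := by
      have hrfl : H (Ψ (t, (0:Y))) = F ((Ψ (t, (0:Y))).1,
          (Ψ (t, (0:Y))).1 • ((Ψ (t, (0:Y))).2.1 - w), (Ψ (t, (0:Y))).2.2) := rfl
      rw [hrfl, h1]
    rw [← h5, h4, hHdef]
    simpa using hq1
  · have hu : DifferentiableAt ℝ (fun t : ℝ => (Ψ (t, (0:Y))).2.1) 0 :=
      ((hu1.contDiffAt hIoonhds).differentiableAt hr0)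
    have hx1 : HasDerivAt (fun t : ℝ => t • ((Ψ (t, (0:Y))).2.1 - w))
        ((0:ℝ) • (deriv (fun t : ℝ => (Ψ (t, (0:Y))).2.1) 0)
          + (1:ℝ) • ((Ψ ((0:ℝ), (0:Y))).2.1 - w)) 0 := by
      exact (hasDerivAt_id 0).smul ((hu.hasDerivAt).sub_const w)
    rw [hx1.deriv, hΨ0]
    simp only [zero_smul, zero_add, one_smul]
    show (0:X₁) - w = -w
    exact zero_sub w
end

section
/- Let $A$ and $B$ be real $n \times n$ matrices and let $\mu \in \mathbb{C}$ be a simple zero of the complex polynomial $\chi(s) = \det(A - sB)$ (i.e., $\chi(\mu) = 0$ and $\chi'(\mu) \neq 0$), where the determinant is computed over $\mathbb{C}$. Then the complex kernels $\ker_{\mathbb{C}}(A - \mu B)$ and $\ker_{\mathbb{C}}((A - \mu B)^T)$ are both one-dimensional over $\mathbb{C}$, and for every nonzero $v \in \ker_{\mathbb{C}}(A - \mu B)$ and every nonzero $w \in \ker_{\mathbb{C}}((A - \mu B)^T)$ one has $w^T B v \neq 0$. -/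
open Matrix Polynomial

namespace SimpleZeroAux

variable {n : ℕ}

lemma dvd_det (Q : Matrix (Fin n) (Fin n) ℂ[X]) (d : Fin n → ℕ)
    (h : ∀ i j, (X : ℂ[X]) ^ (d j) ∣ Q i j) :
    (X : ℂ[X]) ^ (∑ j, d j) ∣ Q.det := by
  rw [Matrix.det_apply]
  refine Finset.dvd_sum fun σ _ => ?_
  rw [Units.smul_def, zsmul_eq_mul]
  refine Dvd.dvd.mul_left ?_ _
  rw [← Finset.prod_pow_eq_pow_sum]
  exact Finset.prod_dvd_prod_of_dvd _ _ fun j _ => h (σ j) j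

lemma coreDvd (N P : Matrix (Fin n) (Fin n) ℂ[X])
    (h0 : (P.map (eval 0)).det ≠ 0)
    (d : Fin n → ℕ) (hd : 2 ≤ ∑ j, d j)
    (hdvd : ∀ i j, (X : ℂ[X]) ^ (d j) ∣ (N * P) i j) :
    (X : ℂ[X]) ^ 2 ∣ N.det := by
  have h1 : (X : ℂ[X]) ^ 2 ∣ N.det * P.det := by
    have h2 := dvd_det (N * P) d hdvd
    rw [Matrix.det_mul] at h2
    exact dvd_trans (pow_dvd_pow _ hd) h2
  refine Polynomial.prime_X.pow_dvd_of_dvd_mul_right 2 (fun hc => h0 ?_) h1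
  rw [X_dvd_iff, coeff_zero_eq_eval_zero] at hc
  rw [show (P.map (eval 0)) = (Polynomial.evalRingHom (0:ℂ)).mapMatrix P from rfl, ← RingHom.map_det]
  exact hc

end SimpleZeroAux

namespace SimpleZeroAux

variable {n : ℕ}

lemma exists_basis_matrix {m : ℕ} (vs : Fin m → (Fin n → ℂ))
    (h : LinearIndependent ℂ vs) :
    ∃ (P : Matrix (Fin n) (Fin n) ℂ) (f : Fin m → Fin n),
      P.det ≠ 0 ∧ Function.Injective f ∧ ∀ k i, P i (f k) = vs k i := by
  have hsub : LinearIndepOn ℂ id (Set.range vs) :=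
    (linearIndepOn_id_range_iff h.injective).mpr h
  let b : Module.Basis (hsub.extend (Set.subset_univ _)) ℂ (Fin n → ℂ) := Module.Basis.extend hsub
  haveI : Fintype (hsub.extend (Set.subset_univ _)) := FiniteDimensional.fintypeBasisIndex b
  have hcard : Fintype.card (hsub.extend (Set.subset_univ _)) = n := by
    have h1 := Module.finrank_eq_card_basis b
    rw [Module.finrank_fin_fun] at h1
    omega
  let e : Fin n ≃ hsub.extend (Set.subset_univ _) := (Fintype.equivFinOfCardEq hcard).symm
  let b' : Module.Basis (Fin n) ℂ (Fin n → ℂ) := b.reindex e.symm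
  have hmem : ∀ k, vs k ∈ hsub.extend (Set.subset_univ _) := fun k =>
    hsub.subset_extend _ ⟨k, rfl⟩
  refine ⟨Matrix.of fun i j => b' j i, fun k => e.symm ⟨vs k, hmem k⟩, ?_, ?_, ?_⟩
  · have hM : (Matrix.of fun i j => b' j i) = (Pi.basisFun ℂ (Fin n)).toMatrix b' := by
      ext i j
      simp [Module.Basis.toMatrix_apply]
    have h1 := Module.Basis.toMatrix_mul_toMatrix_flip (Pi.basisFun ℂ (Fin n)) b'
    intro hc
    have h2 : ((Pi.basisFun ℂ (Fin n)).toMatrix b').det * (b'.toMatrix (Pi.basisFun ℂ (Fin n))).det = 1 := by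
      rw [← Matrix.det_mul, h1, Matrix.det_one]
    rw [hM] at hc
    rw [hc, zero_mul] at h2
    exact zero_ne_one h2
  · intro k l hkl
    have := e.symm.injective hkl
    have hv : vs k = vs l := congrArg Subtype.val this
    exact h.injective hv
  · intro k i
    show b' (e.symm ⟨vs k, hmem k⟩) i = vs k i
    have : b' (e.symm ⟨vs k, hmem k⟩) = b ⟨vs k, hmem k⟩ := by
      simp [b', Module.Basis.reindex_apply]
    rw [this, Module.Basis.extend_apply_self]

end SimpleZeroAux

namespace SimpleZeroAux

variable {n : ℕ}

lemma mul_apply_eq_mulVec (N Q : Matrix (Fin n) (Fin n) ℂ[X]) (i j : Fin n) :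
    (N * Q) i j = (N *ᵥ (fun k => Q k j)) i := rfl

lemma mulVec_C (M Bc : Matrix (Fin n) (Fin n) ℂ) (v : Fin n → ℂ) :
    (M.map C - (X : ℂ[X]) • Bc.map C) *ᵥ (fun k => C (v k))
      = fun i => C ((M *ᵥ v) i) - X * C ((Bc *ᵥ v) i) := by
  funext i
  simp only [Matrix.mulVec, dotProduct, Matrix.sub_apply, Matrix.smul_apply,
    Matrix.map_apply, smul_eq_mul, sub_mul, Finset.sum_sub_distrib, ← C_mul,
    mul_assoc, ← Finset.mul_sum, ← map_sum]

lemma dvd_of_two_kernel (M Bc : Matrix (Fin n) (Fin n) ℂ) (v1 v2 : Fin n → ℂ)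
    (h : LinearIndependent ℂ ![v1, v2])
    (h1 : M *ᵥ v1 = 0) (h2 : M *ᵥ v2 = 0) :
    (X : ℂ[X]) ^ 2 ∣ (M.map C - (X : ℂ[X]) • Bc.map C).det := by
  obtain ⟨P, f, hPdet, hfinj, hPcol⟩ := exists_basis_matrix ![v1, v2] h
  set N : Matrix (Fin n) (Fin n) ℂ[X] := M.map C - (X : ℂ[X]) • Bc.map C with hN
  have hker : ∀ k : Fin 2, M *ᵥ (![v1, v2] k) = 0 := by
    intro k
    fin_cases k <;> simpa
  refine coreDvd N (P.map C) ?_ (fun j => if j = f 0 ∨ j = f 1 then 1 else 0) ?_ ?_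
  · have : (P.map C).map (eval 0) = P := by
      ext i j; simp
    rw [this]; exact hPdet
  · have hne : f 0 ≠ f 1 := fun hc => by simpa using hfinj hc
    have hsub : ({f 0, f 1} : Finset (Fin n)) ⊆ Finset.univ := Finset.subset_univ _
    calc (2 : ℕ) = ∑ j ∈ ({f 0, f 1} : Finset (Fin n)),
          (if j = f 0 ∨ j = f 1 then 1 else 0) := by
            rw [Finset.sum_pair hne]
            simp
      _ ≤ _ := Finset.sum_le_sum_of_subset hsub
  · intro i j
    by_cases hj : j = f 0 ∨ j = f 1
    · simp only [if_pos hj]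
      obtain ⟨k, hk⟩ : ∃ k : Fin 2, j = f k := by
        rcases hj with h' | h'
        exacts [⟨0, h'⟩, ⟨1, h'⟩]
      subst hk
      rw [mul_apply_eq_mulVec]
      have hcol : (fun kk => (P.map C) kk (f k)) = fun kk => C ((![v1, v2] k) kk) := by
        funext kk; simp [Matrix.map_apply, hPcol k kk]
      rw [hcol, hN, mulVec_C, hker k]
      simp only [Pi.zero_apply, map_zero, zero_sub, pow_one, dvd_neg]
      exact Dvd.intro _ rfl
    · simp only [if_neg hj, pow_zero]
      exact one_dvd _

lemma dvd_of_kernel_and_range (M Bc : Matrix (Fin n) (Fin n) ℂ) (v u : Fin n → ℂ)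
    (hv : v ≠ 0) (hMv : M *ᵥ v = 0) (hu : M *ᵥ u = Bc *ᵥ v) :
    (X : ℂ[X]) ^ 2 ∣ (M.map C - (X : ℂ[X]) • Bc.map C).det := by
  have hli : LinearIndependent ℂ (fun _ : Fin 1 => v) :=
    linearIndependent_unique_iff.mpr hv
  obtain ⟨P, f, hPdet, _, hPcol⟩ := exists_basis_matrix (fun _ : Fin 1 => v) hli
  set N : Matrix (Fin n) (Fin n) ℂ[X] := M.map C - (X : ℂ[X]) • Bc.map C with hN
  set P' : Matrix (Fin n) (Fin n) ℂ[X] :=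
    (P.map C).updateCol (f 0) (fun k => C (v k) + X * C (u k)) with hP'
  refine coreDvd N P' ?_ (fun j => if j = f 0 then 2 else 0) ?_ ?_
  · have : P'.map (eval 0) = P := by
      ext i j
      by_cases hj : j = f 0
      · subst hj
        simp [hP', Matrix.updateCol_self, hPcol 0 i]
      · simp [hP', Matrix.updateCol_ne hj]
    rw [this]; exact hPdet
  · rw [Finset.sum_ite_eq' Finset.univ (f 0) (fun _ => 2)]
    simp
  · intro i j
    by_cases hj : j = f 0
    · subst hj
      simp only [if_pos rfl]
      rw [mul_apply_eq_mulVec]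
      have hcol : (fun k => P' k (f 0)) = (fun k => C (v k)) + (X : ℂ[X]) • (fun k => C (u k)) := by
        funext k
        simp [hP', Matrix.updateCol_self, Pi.smul_apply, smul_eq_mul]
      rw [hcol, Matrix.mulVec_add, Matrix.mulVec_smul, hN, mulVec_C, mulVec_C, hMv, hu]
      simp only [Pi.add_apply, Pi.smul_apply, Pi.zero_apply, map_zero, zero_sub, smul_eq_mul,
        mul_sub]
      ring_nf
      simp only [if_true]
      exact (dvd_neg).2 (Dvd.intro _ rfl)
    · simp only [if_neg hj, pow_zero]
      exact one_dvd _

end SimpleZeroAux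

namespace SimpleZeroAux

variable {n : ℕ}

lemma finrank_ker_eq_one (M Bc : Matrix (Fin n) (Fin n) ℂ) (hdet : M.det = 0)
    (hnd : ¬ (X : ℂ[X]) ^ 2 ∣ (M.map C - (X : ℂ[X]) • Bc.map C).det) :
    Module.finrank ℂ (LinearMap.ker M.mulVecLin) = 1 := by
  refine le_antisymm ?_ ?_
  · by_contra hgt
    push_neg at hgt
    obtain ⟨g, hg⟩ := exists_linearIndependent_of_le_finrank
      (R := ℂ) (M := LinearMap.ker M.mulVecLin) hgt
    have hli : LinearIndependent ℂ (fun k : Fin 2 => ((g k : Fin n → ℂ))) :=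
      hg.map' (LinearMap.ker M.mulVecLin).subtype (Submodule.ker_subtype _)
    have hli2 : LinearIndependent ℂ ![(g 0 : Fin n → ℂ), (g 1 : Fin n → ℂ)] := by
      have : (fun k : Fin 2 => ((g k : Fin n → ℂ)))
          = ![(g 0 : Fin n → ℂ), (g 1 : Fin n → ℂ)] := by
        funext k; fin_cases k <;> rfl
      rwa [this] at hli
    have hm : ∀ k : Fin 2, M *ᵥ (g k : Fin n → ℂ) = 0 := fun k => (g k).2
    exact hnd (dvd_of_two_kernel M Bc _ _ hli2 (hm 0) (hm 1))
  · obtain ⟨v, hv0, hv⟩ := Matrix.exists_mulVec_eq_zero_iff.mpr hdet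
    have : Nontrivial (LinearMap.ker M.mulVecLin) := by
      exact nontrivial_of_ne ⟨v, hv⟩ 0 fun hc => hv0 (congrArg Subtype.val hc)
    exact Module.finrank_pos_iff.mpr this

end SimpleZeroAux

open SimpleZeroAux in
/-- Complex-branch variant (Remark 2 of the paper): if `μ ∈ ℂ` is a simple zero of
`χ(s) = det(A - sB)` computed over `ℂ` (with `A`, `B` real matrices regarded as complex),
then the complex kernels of `A - μB` and of its transpose are one-dimensional over `ℂ`,
and `wᵀBv ≠ 0` for nonzero kernel vectors `v`, `w`. -/
theorem simple_zero_det_pencil_complex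
    {n : ℕ} (A B : Matrix (Fin n) (Fin n) ℝ)
    (χ : ℂ → ℂ)
    (hχ : ∀ s : ℂ,
      χ s = (A.map (Complex.ofReal) - s • B.map (Complex.ofReal)).det)
    (μ : ℂ) (hμ : χ μ = 0) (hμ' : deriv χ μ ≠ 0) :
    Module.finrank ℂ
      (LinearMap.ker (A.map (Complex.ofReal) - μ • B.map (Complex.ofReal)).mulVecLin) = 1 ∧
    Module.finrank ℂ
      (LinearMap.ker ((A.map (Complex.ofReal) - μ • B.map (Complex.ofReal))ᵀ).mulVecLin) = 1 ∧
    ∀ v w : Fin n → ℂ, v ≠ 0 → w ≠ 0 →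
      (A.map (Complex.ofReal) - μ • B.map (Complex.ofReal)) *ᵥ v = 0 →
      (A.map (Complex.ofReal) - μ • B.map (Complex.ofReal))ᵀ *ᵥ w = 0 →
      w ⬝ᵥ (B.map (Complex.ofReal) *ᵥ v) ≠ 0 := by
  classical
  set Mc : Matrix (Fin n) (Fin n) ℂ := A.map Complex.ofReal - μ • B.map Complex.ofReal with hMc
  set Bc : Matrix (Fin n) (Fin n) ℂ := B.map Complex.ofReal with hBc
  set p : ℂ[X] := (Mc.map C - (X : ℂ[X]) • Bc.map C).det with hp
  have heval : ∀ t : ℂ, p.eval t = (Mc - t • Bc).det := by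
    intro t
    have h1 : (Mc.map C - (X : ℂ[X]) • Bc.map C).map (eval t) = Mc - t • Bc := by
      ext i j
      simp only [Matrix.map_apply, Matrix.sub_apply, Matrix.smul_apply, smul_eq_mul,
        Polynomial.eval_sub, Polynomial.eval_mul, Polynomial.eval_X, Polynomial.eval_C]
    calc p.eval t
        = ((Polynomial.evalRingHom t) : ℂ[X] →+* ℂ) (Mc.map C - (X : ℂ[X]) • Bc.map C).det :=
          rfl
      _ = (((Polynomial.evalRingHom t).mapMatrix (Mc.map C - (X : ℂ[X]) • Bc.map C)) :
            Matrix (Fin n) (Fin n) ℂ).det := RingHom.map_det _ _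
      _ = (Mc - t • Bc).det := by
            rw [show ((Polynomial.evalRingHom t).mapMatrix (Mc.map C - (X : ℂ[X]) • Bc.map C) :
              Matrix (Fin n) (Fin n) ℂ) = (Mc.map C - (X : ℂ[X]) • Bc.map C).map (eval t) from
              rfl, h1]
  have hχ' : ∀ s : ℂ, χ s = p.eval (s - μ) := by
    intro s
    rw [heval, hχ s]
    congr 1
    rw [hMc, sub_smul]
    abel
  have hdet0 : Mc.det = 0 := by
    rw [hMc, ← hχ μ]
    exact hμ
  have hder : deriv χ μ = p.derivative.eval 0 := by
    have hfun : χ = fun s => (p.comp (X - Polynomial.C μ)).eval s := by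
      funext s
      rw [hχ' s, Polynomial.eval_comp]
      simp
    rw [hfun, Polynomial.deriv, Polynomial.derivative_comp]
    simp
  have hnd : ¬ (X : ℂ[X]) ^ 2 ∣ p := by
    rintro ⟨g, hg⟩
    apply hμ'
    rw [hder, hg]
    simp [Polynomial.derivative_mul, Polynomial.derivative_pow]
  have hker1 : Module.finrank ℂ (LinearMap.ker Mc.mulVecLin) = 1 :=
    finrank_ker_eq_one Mc Bc hdet0 (by rw [← hp]; exact hnd)
  have hdetT : Mcᵀ.det = 0 := by rw [Matrix.det_transpose]; exact hdet0
  have hndT : ¬ (X : ℂ[X]) ^ 2 ∣ (Mcᵀ.map C - (X : ℂ[X]) • Bcᵀ.map C).det := by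
    have hTeq : (Mcᵀ.map C - (X : ℂ[X]) • Bcᵀ.map C)
        = (Mc.map C - (X : ℂ[X]) • Bc.map C)ᵀ := by
      ext i j
      simp [Matrix.transpose_apply, Matrix.map_apply]
    rw [hTeq, Matrix.det_transpose, ← hp]
    exact hnd
  have hker2 : Module.finrank ℂ (LinearMap.ker Mcᵀ.mulVecLin) = 1 :=
    finrank_ker_eq_one Mcᵀ Bcᵀ hdetT hndT
  refine ⟨hker1, hker2, ?_⟩
  intro v w hv hw hMv hMw h0
  let ℓ : (Fin n → ℂ) →ₗ[ℂ] ℂ :=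
    { toFun := fun x => w ⬝ᵥ x
      map_add' := fun x y => dotProduct_add w x y
      map_smul' := fun c x => by simp [dotProduct_smul] }
  obtain ⟨i0, hi0⟩ := Function.ne_iff.mp hw
  have hrange1 : Module.finrank ℂ (LinearMap.range ℓ) = 1 := by
    refine le_antisymm ((Submodule.finrank_le _).trans_eq (Module.finrank_self ℂ)) ?_
    have hne : ℓ (Pi.single i0 1) ≠ 0 := by
      show w ⬝ᵥ Pi.single i0 1 ≠ 0
      simpa using hi0
    have : Nontrivial (LinearMap.range ℓ) :=
      nontrivial_of_ne ⟨ℓ (Pi.single i0 1), LinearMap.mem_range_self _ _⟩ 0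
        (fun hc => hne (congrArg Subtype.val hc))
    exact Module.finrank_pos_iff.mpr this
  have hrk := LinearMap.finrank_range_add_finrank_ker ℓ
  have hfin : Module.finrank ℂ (Fin n → ℂ) = n := Module.finrank_fin_fun ℂ
  rw [hfin, hrange1] at hrk
  have hrkM := LinearMap.finrank_range_add_finrank_ker Mc.mulVecLin
  rw [hfin, hker1] at hrkM
  have hle : LinearMap.range Mc.mulVecLin ≤ LinearMap.ker ℓ := by
    rintro x ⟨u, rfl⟩
    show w ⬝ᵥ (Mc.mulVecLin u) = 0
    rw [Matrix.mulVecLin_apply, Matrix.dotProduct_mulVec, ← Matrix.mulVec_transpose, hMw]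
    exact zero_dotProduct u
  have heq : LinearMap.range Mc.mulVecLin = LinearMap.ker ℓ := by
    apply Submodule.eq_of_le_of_finrank_le hle
    omega
  have hmem : Bc *ᵥ v ∈ LinearMap.range Mc.mulVecLin := by
    rw [heq]
    exact LinearMap.mem_ker.mpr h0
  obtain ⟨u, hu⟩ := hmem
  apply hnd
  rw [hp]
  exact dvd_of_kernel_and_range Mc Bc v u hv hMv (by rw [← hu, Matrix.mulVecLin_apply])
end
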